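/- Erosion commutes with Möbius inversion: if X : Dgm → G is constructible, Y : Dgm → G is finite, and X(I) = Σ_{J ⊇ I} Y(J) for all I, then for every ε ≥ 0 and every I ∈ Dgm, X(Grow^ε(I)) = Σ_{J ⊇ I} Y(Grow^ε(J)). -/

import Mathlib

open scoped Classical

/-- The poset `Dgm`: half-open intervals `[p,q)` with `p<q` together with `[p,∞)`,
encoded as a pair of a real left endpoint and an `EReal` right endpoint. -/
def Dgm : Type := {x : ℝ × EReal // (x.1 : EReal) < x.2}

/-- The underlying subset of `ℝ` of an interval in `Dgm`. -/
def Dgm.set (I : Dgm) : Set ℝ := {r : ℝ | I.1.1 ≤ r ∧ (r : EReal) < I.1.2}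

/-- Containment of intervals: `J ⊇ I`. -/
def Dgm.sub (I J : Dgm) : Prop := I.set ⊆ J.set

/-- The half-open interval `[p,q)`. -/
def Dgm.mkI (p q : ℝ) (h : p < q) : Dgm := ⟨(p, (q : EReal)), by simpa using EReal.coe_lt_coe_iff.mpr h⟩

/-- The half-infinite interval `[p,∞)`. -/
noncomputable def Dgm.mkInf (p : ℝ) : Dgm := ⟨(p, ⊤), by simpa using EReal.coe_lt_top p⟩

variable {G : Type*} [AddCommGroup G]

/-- `X : Dgm → G` is `S`-constructible. -/
def SConstructible (S : Set ℝ) (X : Dgm → G) : Prop :=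
  ∀ I J : Dgm, I.sub J → J.set ∩ S = I.set ∩ S → X I = X J

/-- `Y : Dgm → G` is `S`-finite. -/
def SFinite (S : Set ℝ) (Y : Dgm → G) : Prop :=
  ∀ I : Dgm, Y I ≠ 0 →
    (∃ si ∈ S, ∃ sj ∈ S, ∃ h : si < sj, I = Dgm.mkI si sj h) ∨ (∃ si ∈ S, I = Dgm.mkInf si)

/-- The cumulative sum `Σ_{J ⊇ I} Y(J)`. -/
noncomputable def cumSum (Y : Dgm → G) (I : Dgm) : G := ∑ᶠ (J : Dgm) (_ : I.sub J), Y J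


/-- `Grow^ε` sends `[p,q)` to `[p-ε, q+ε)` and `[p,∞)` to `[p-ε,∞)`. -/
noncomputable def Dgm.grow (ε : ℝ) (hε : 0 ≤ ε) (I : Dgm) : Dgm :=
  ⟨(I.1.1 - ε, I.1.2 + (ε : EReal)), by
    calc ((I.1.1 - ε : ℝ) : EReal) ≤ (I.1.1 : EReal) :=
          EReal.coe_le_coe_iff.mpr (sub_le_self _ hε)
      _ < I.1.2 := I.2
      _ ≤ I.1.2 + (ε : EReal) := le_add_of_nonneg_right (by exact_mod_cast hε)⟩


lemma ereal_add_coe_le_iff (x y : EReal) (c : ℝ) : x + (c : EReal) ≤ y + (c : EReal) ↔ x ≤ y :=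
  ⟨fun h => (EReal.addLECancellable_coe c).add_le_add_iff_right.mp h,
   fun h => add_le_add_left h _⟩

lemma ereal_add_coe_inj (x y : EReal) (c : ℝ) (h : x + (c : EReal) = y + (c : EReal)) : x = y :=
  le_antisymm ((ereal_add_coe_le_iff x y c).mp h.le) ((ereal_add_coe_le_iff y x c).mp h.ge)

lemma Dgm.sub_iff (I J : Dgm) : I.sub J ↔ J.1.1 ≤ I.1.1 ∧ I.1.2 ≤ J.1.2 := by
  constructor
  · intro h
    have hmem : I.1.1 ∈ I.set := ⟨le_refl _, I.2⟩
    have h1 := h hmem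
    refine ⟨h1.1, ?_⟩
    by_contra hlt
    push_neg at hlt
    have hne_top : J.1.2 ≠ ⊤ := (hlt.trans_le le_top).ne
    have hne_bot : J.1.2 ≠ ⊥ := ne_bot_of_gt J.2
    set b : ℝ := J.1.2.toReal with hbdef
    have hb : J.1.2 = (b : EReal) := (EReal.coe_toReal hne_top hne_bot).symm
    · have hrI : max I.1.1 b ∈ I.set := by
        refine ⟨le_max_left _ _, ?_⟩
        have h1' : (I.1.1 : EReal) < I.1.2 := I.2
        have h2' : (b : EReal) < I.1.2 := hb ▸ hlt
        rcases max_cases I.1.1 b with ⟨he, _⟩ | ⟨he, _⟩ <;> rw [he] <;> assumption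
      have := (h hrI).2
      rw [hb] at this
      exact absurd (EReal.coe_lt_coe_iff.mp this) (not_lt.mpr (le_max_right _ _))
  · rintro ⟨h1, h2⟩ r ⟨hr1, hr2⟩
    exact ⟨h1.trans hr1, hr2.trans_le h2⟩

lemma Dgm.grow_fst (ε : ℝ) (hε : 0 ≤ ε) (I : Dgm) : (Dgm.grow ε hε I).1.1 = I.1.1 - ε := rfl

lemma Dgm.grow_snd (ε : ℝ) (hε : 0 ≤ ε) (I : Dgm) :
    (Dgm.grow ε hε I).1.2 = I.1.2 + (ε : EReal) := rfl

lemma Dgm.grow_sub_iff (ε : ℝ) (hε : 0 ≤ ε) (I J : Dgm) :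
    (Dgm.grow ε hε I).sub (Dgm.grow ε hε J) ↔ I.sub J := by
  rw [Dgm.sub_iff, Dgm.sub_iff, Dgm.grow_fst, Dgm.grow_fst, Dgm.grow_snd, Dgm.grow_snd,
    sub_le_sub_iff_right, ereal_add_coe_le_iff]

lemma ereal_add_neg_add (x : EReal) (ε : ℝ) : x + ((-ε : ℝ) : EReal) + (ε : EReal) = x := by
  rw [add_assoc, ← EReal.coe_add, neg_add_cancel, EReal.coe_zero, add_zero]

lemma ereal_add_add_neg (x : EReal) (ε : ℝ) : x + (ε : EReal) + ((-ε : ℝ) : EReal) = x := by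
  rw [add_assoc, ← EReal.coe_add, add_neg_cancel, EReal.coe_zero, add_zero]

lemma Dgm.grow_image (ε : ℝ) (hε : 0 ≤ ε) (I : Dgm) :
    Dgm.grow ε hε '' {J | I.sub J} = {K | (Dgm.grow ε hε I).sub K} := by
  ext K
  simp only [Set.mem_image, Set.mem_setOf_eq]
  constructor
  · rintro ⟨J, hJ, rfl⟩
    exact (Dgm.grow_sub_iff ε hε I J).mpr hJ
  · intro hK
    obtain ⟨h1, h2⟩ := (Dgm.sub_iff _ _).mp hK
    rw [Dgm.grow_fst] at h1
    rw [Dgm.grow_snd] at h2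
    have h1' : K.1.1 + ε ≤ I.1.1 := by linarith
    have h2' : I.1.2 ≤ K.1.2 + ((-ε : ℝ) : EReal) := by
      calc I.1.2 = I.1.2 + (ε : EReal) + ((-ε : ℝ) : EReal) := (ereal_add_add_neg _ _).symm
        _ ≤ K.1.2 + ((-ε : ℝ) : EReal) := add_le_add_left h2 _
    refine ⟨⟨(K.1.1 + ε, K.1.2 + ((-ε : ℝ) : EReal)), ?_⟩, ?_, ?_⟩
    · calc ((K.1.1 + ε : ℝ) : EReal) ≤ (I.1.1 : EReal) := EReal.coe_le_coe_iff.mpr h1'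
        _ < I.1.2 := I.2
        _ ≤ K.1.2 + ((-ε : ℝ) : EReal) := h2'
    · exact (Dgm.sub_iff _ _).mpr ⟨h1', h2'⟩
    · apply Subtype.ext
      apply Prod.ext
      · show K.1.1 + ε - ε = K.1.1
        ring
      · show K.1.2 + ((-ε : ℝ) : EReal) + (ε : EReal) = K.1.2
        exact ereal_add_neg_add _ _

/-- Erosion commutes with Möbius inversion. -/
theorem grow_commutes_mobius (S T : Finset ℝ) (X Y : Dgm → G)
    (hX : SConstructible (S : Set ℝ) X) (hY : SFinite (T : Set ℝ) Y)
    (hinv : ∀ I : Dgm, X I = cumSum Y I) :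
    ∀ (ε : ℝ) (hε : 0 ≤ ε) (I : Dgm),
      X (Dgm.grow ε hε I) = ∑ᶠ (J : Dgm) (_ : I.sub J), Y (Dgm.grow ε hε J) := by
  intro ε hε I
  rw [hinv]
  unfold cumSum
  have hinj : Set.InjOn (Dgm.grow ε hε) {J | I.sub J} := by
    intro J1 _ J2 _ h
    apply Subtype.ext
    apply Prod.ext
    · have h1 := congrArg (fun K : Dgm => K.1.1) h
      simp only [Dgm.grow_fst] at h1
      linarith
    · have h2 := congrArg (fun K : Dgm => K.1.2) h
      simp only [Dgm.grow_snd] at h2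
      exact ereal_add_coe_inj _ _ _ h2
  have key : (∑ᶠ (K : Dgm) (_ : (Dgm.grow ε hε I).sub K), Y K)
      = ∑ᶠ K ∈ Dgm.grow ε hε '' {J | I.sub J}, Y K := by
    rw [Dgm.grow_image ε hε I]
    rfl
  rw [key, finsum_mem_image hinj]
  rfl
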